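/- Let F be a field, (A,m) a finite multiset in F^n (A ⊆ F^n finite, m : A → ℕ positive). Then the operators {(T^a)^{(β)} : a ∈ A, β ∈ ℕ^n, |β| ≤ m(a)-1} on F[X_1,...,X_n] are linearly independent, where (T^a)^{(β)} f(X) = [Y^β] f(X + a + Y). -/

import Mathlib

/-- The multivariate Hasse derivative `H^(r)`, acting on monomials by
`H^(r) X^β = (∏ i, C(β i, r i)) • X^(β - r)`. -/
noncomputable def mvHasseDeriv {F : Type*} [CommRing F] {n : ℕ} (r : Fin n →₀ ℕ)
    (f : MvPolynomial (Fin n) F) : MvPolynomial (Fin n) F :=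
  ∑ β ∈ f.support,
    MvPolynomial.monomial (β - r) (((∏ i, (β i).choose (r i) : ℕ) : F) * f.coeff β)

/-- The multishift operator `(T^a)^(β) = H^(β) ∘ T^a`, where `T^a f (X) = f(X + a)`. -/
noncomputable def multishift {F : Type*} [CommRing F] {n : ℕ} (a : Fin n → F)
    (β : Fin n →₀ ℕ) (f : MvPolynomial (Fin n) F) : MvPolynomial (Fin n) F :=
  mvHasseDeriv β
    (MvPolynomial.aeval (fun i => MvPolynomial.X i + MvPolynomial.C (a i)) f)

open MvPolynomial

lemma coeff_zero_mvHasseDeriv {F : Type*} [CommRing F] {n : ℕ} (r : Fin n →₀ ℕ)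
    (f : MvPolynomial (Fin n) F) : (mvHasseDeriv r f).coeff 0 = f.coeff r := by
  classical
  unfold mvHasseDeriv
  rw [MvPolynomial.coeff_sum]
  simp only [coeff_monomial]
  rw [Finset.sum_eq_single r]
  · split_ifs with h
    · simp
    · exact absurd (by ext i; simp) h
  · intro b hb hbr
    split_ifs with h
    · have hle : b ≤ r := by
        intro i
        have := congrFun (congrArg (fun g : Fin n →₀ ℕ => (g : Fin n → ℕ)) h) i
        simp at this
        omega
      have : ∃ i, b i < r i := by
        by_contra hc
        push_neg at hc
        exact hbr (Finsupp.ext fun i => le_antisymm (hle i) (hc i))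
      obtain ⟨i, hi⟩ := this
      rw [Finset.prod_eq_zero (Finset.mem_univ i) (Nat.choose_eq_zero_of_lt hi)]
      simp
    · rfl
  · intro h
    rw [MvPolynomial.notMem_support_iff] at h
    simp [h]

lemma apply_le_wsum {n : ℕ} (d : Fin n →₀ ℕ) (j : Fin n) : d j ≤ d.sum fun _ k => k := by
  classical
  by_cases h : j ∈ d.support
  · exact Finset.single_le_sum (fun _ _ => Nat.zero_le _) h
  · simp [Finsupp.notMem_support_iff.mp h]

lemma one_le_wsum {n : ℕ} (d : Fin n →₀ ℕ) (hd : d ≠ 0) : 1 ≤ d.sum fun _ k => k := by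
  obtain ⟨j, hj⟩ := Finsupp.ne_iff.mp hd
  simp only [Finsupp.coe_zero, Pi.zero_apply] at hj
  calc 1 ≤ d j := Nat.one_le_iff_ne_zero.mpr hj
  _ ≤ _ := apply_le_wsum d j

lemma wsum_add {n : ℕ} (a b : Fin n →₀ ℕ) :
    ((a + b).sum fun _ k => k) = (a.sum fun _ k => k) + (b.sum fun _ k => k) :=
  Finsupp.sum_add_index' (fun _ => rfl) (fun _ _ _ => rfl)

theorem multishift_linearIndependent {F : Type*} [Field F] {n : ℕ}
    (A : Finset (Fin n → F)) (m : (Fin n → F) → ℕ) (hm : ∀ a ∈ A, 0 < m a) :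
    LinearIndependent F
      (fun x : {q : (Fin n → F) × (Fin n →₀ ℕ) //
          q.1 ∈ A ∧ (q.2.sum fun _ k => k) ≤ m q.1 - 1} =>
        (multishift x.1.1 x.1.2 :
          MvPolynomial (Fin n) F → MvPolynomial (Fin n) F)) := by
  classical
  rw [linearIndependent_iff']
  intro s g hsum
  set M := A.sup m with hMdef
  have hM : ∀ a ∈ A, m a ≤ M := fun a ha => Finset.le_sup ha
  -- key relation
  have hrel : ∀ f : MvPolynomial (Fin n) F,
      ∑ i ∈ s, g i *
        ((MvPolynomial.aeval (fun k => X k + C (i.1.1 k))) f).coeff i.1.2 = 0 := by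
    intro f
    have h0 := congrFun hsum f
    rw [Finset.sum_apply] at h0
    simp only [Pi.smul_apply, Pi.zero_apply] at h0
    have h1 := congrArg (MvPolynomial.coeff 0) h0
    rw [MvPolynomial.coeff_sum] at h1
    simpa only [MvPolynomial.coeff_smul, smul_eq_mul, multishift,
      coeff_zero_mvHasseDeriv, MvPolynomial.coeff_zero] using h1
  have main : ∀ t : ℕ, ∀ i ∈ s, M ≤ (i.1.2.sum fun _ k => k) + t → g i = 0 := by
    intro t
    induction t with
    | zero =>
      intro i hi hle
      exfalso
      have h1 := i.2.1
      have h2 := i.2.2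
      have h3 := hm _ h1
      have h4 := hM _ h1
      omega
    | succ t IH =>
      intro i0 hi0 hle
      set a0 : Fin n → F := i0.1.1 with ha0
      set β0 : Fin n →₀ ℕ := i0.1.2 with hβ0
      have hex : ∀ b ∈ A.erase a0, ∃ k, b k ≠ a0 k := fun b hb =>
        Function.ne_iff.mp (Finset.ne_of_mem_erase hb)
      set E := (A.erase a0).attach with hE
      let idx : {x // x ∈ A.erase a0} → Fin n := fun b => (hex b.1 b.2).choose
      have hidx : ∀ b, b.1 (idx b) ≠ a0 (idx b) := fun b => (hex b.1 b.2).choose_spec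
      set P : MvPolynomial (Fin n) F :=
        ∏ x ∈ β0.support, (X x - C (a0 x)) ^ β0 x with hP
      set G : MvPolynomial (Fin n) F :=
        ∏ b ∈ E, (X (idx b) - C (b.1 (idx b))) with hG
      set f := P * G ^ M with hf
      -- image under shift by a0
      have hP0 : (MvPolynomial.aeval (fun k => X k + C (a0 k))) P = monomial β0 (1:F) := by
        rw [hP, map_prod, ← prod_X_pow_eq_monomial]
        apply Finset.prod_congr rfl
        intro x _
        rw [map_pow, map_sub, aeval_X, aeval_C]
        simp [MvPolynomial.algebraMap_eq]
      set h : MvPolynomial (Fin n) F :=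
        (MvPolynomial.aeval (fun k => X k + C (a0 k))) G with hh
      have hconst : MvPolynomial.constantCoeff h =
          ∏ b ∈ E, (a0 (idx b) - b.1 (idx b)) := by
        rw [hh, hG, map_prod, map_prod]
        apply Finset.prod_congr rfl
        intro b _
        rw [map_sub, aeval_X, aeval_C]
        simp [MvPolynomial.algebraMap_eq]
      have hcne : MvPolynomial.constantCoeff h ≠ 0 := by
        rw [hconst]
        rw [Finset.prod_ne_zero_iff]
        intro b _
        exact sub_ne_zero.mpr (fun e => hidx b e.symm)
      have hfa0 : (MvPolynomial.aeval (fun k => X k + C (a0 k))) f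
          = monomial β0 (1:F) * h ^ M := by
        rw [hf, map_mul, map_pow, hP0, hh]
      -- the key evaluation
      have hkey := hrel f
      rw [Finset.sum_eq_single_of_mem i0 hi0] at hkey
      · -- conclude g i0 = 0
        rw [hfa0, MvPolynomial.coeff_monomial_mul', if_pos le_rfl, tsub_self] at hkey
        have : MvPolynomial.coeff 0 (h ^ M) = (MvPolynomial.constantCoeff h) ^ M := by
          rw [← MvPolynomial.constantCoeff_eq, map_pow]
        rw [this, one_mul] at hkey
        exact (mul_eq_zero.mp hkey).resolve_right (pow_ne_zero _ hcne)
      · intro i' hi' hne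
        by_cases ha' : i'.1.1 = a0
        · -- same point, different multi-index
          have hβne : i'.1.2 ≠ β0 := by
            intro hβ
            exact hne (Subtype.ext (Prod.ext ha' hβ))
          rw [ha', hfa0, MvPolynomial.coeff_monomial_mul']
          split_ifs with hle'
          · -- β0 ≤ β', use IH
            have hd : i'.1.2 = β0 + (i'.1.2 - β0) := by
              rw [add_tsub_cancel_of_le hle']
            have hdne : i'.1.2 - β0 ≠ 0 := by
              intro h0
              apply hβne
              have := hd
              rw [h0, add_zero] at this
              exact this.symm ▸ rfl
            have hsum' : (β0.sum fun _ k => k) + 1 ≤ i'.1.2.sum fun _ k => k := by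
              conv_rhs => rw [hd]
              rw [wsum_add]
              have := one_le_wsum _ hdne
              omega
            have : g i' = 0 := IH i' hi' (by omega)
            rw [this, zero_mul]
          · rw [mul_zero]
        · -- different point
          have hmem : i'.1.1 ∈ A.erase a0 := Finset.mem_erase.mpr ⟨ha', i'.2.1⟩
          set b' : {x // x ∈ A.erase a0} := ⟨i'.1.1, hmem⟩ with hb'
          set j0 := idx b' with hj0
          set a' : Fin n → F := i'.1.1 with ha'd
          set Q : MvPolynomial (Fin n) F :=
            ∏ b ∈ E.erase b',
              (MvPolynomial.aeval (fun k => X k + C (a' k))) (X (idx b) - C (b.1 (idx b)))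
            with hQ
          have hGa' : (MvPolynomial.aeval (fun k => X k + C (a' k))) G = X j0 * Q := by
            rw [hG, map_prod, ← Finset.mul_prod_erase E _ (Finset.mem_attach _ b')]
            congr 1
            rw [map_sub, aeval_X, aeval_C]
            simp [MvPolynomial.algebraMap_eq, hb', ha'd, hj0]
          have hfa' : (MvPolynomial.aeval (fun k => X k + C (a' k))) f
              = X j0 ^ M * ((MvPolynomial.aeval (fun k => X k + C (a' k))) P * Q ^ M) := by
            rw [hf, map_mul, map_pow, hGa', mul_pow]
            ring
          rw [hfa', MvPolynomial.X_pow_eq_monomial, MvPolynomial.coeff_monomial_mul',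
            if_neg, mul_zero]
          rw [Finsupp.single_le_iff]
          intro hcon
          have h1 := apply_le_wsum i'.1.2 j0
          have h2 := i'.2.2
          have h3 := hm _ i'.2.1
          have h4 := hM _ i'.2.1
          omega
  intro i hi
  exact main M i hi (Nat.le_add_left M _)
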